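/- arXiv:1105.1906 — 4 statements merged into one kernel-verified Lean document; each statement's English description precedes it below -/
import Mathlib

section
/- Let P_k denote the path on k vertices and let p ≥ 1 be an integer. Then C_{p,1}^T(P_k) ≤ 2p + 1. -/
open SimpleGraph

/-- A (p,1)-total labelling of `G`: adjacent vertices get distinct colors, edges sharing an
endpoint get distinct colors, and a vertex and an incident edge differ by at least `p`. -/
def IsPOneTotalLabelling {V : Type*} (G : SimpleGraph V) (p : ℕ)
    (cv : V → ℤ) (ce : G.edgeSet → ℤ) : Prop :=
  (∀ u v : V, G.Adj u v → cv u ≠ cv v) ∧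
  (∀ e f : G.edgeSet, e ≠ f → (∃ v : V, v ∈ (e : Sym2 V) ∧ v ∈ (f : Sym2 V)) → ce e ≠ ce f) ∧
  (∀ (v : V) (e : G.edgeSet), v ∈ (e : Sym2 V) → (p : ℤ) ≤ |cv v - ce e|)

/-- χ_{p,1}^T(G): least `k` such that `G` has a (p,1)-total labelling with colors in
`{0, …, k-1}`. -/
noncomputable def pOneTotalChromatic {V : Type*} (G : SimpleGraph V) (p : ℕ) : ℕ :=
  sInf {k : ℕ | ∃ cv ce, IsPOneTotalLabelling G p cv ce ∧
    (∀ v : V, cv v ∈ Set.Ico (0 : ℤ) k) ∧ (∀ e : G.edgeSet, ce e ∈ Set.Ico (0 : ℤ) k)}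

/-- λ_p^T(G): least `k` such that `G` has a (p,1)-total labelling with colors in `{0, …, k}`. -/
noncomputable def pOneTotalNumber {V : Type*} (G : SimpleGraph V) (p : ℕ) : ℕ :=
  sInf {k : ℕ | ∃ cv ce, IsPOneTotalLabelling G p cv ce ∧
    (∀ v : V, cv v ∈ Set.Icc (0 : ℤ) k) ∧ (∀ e : G.edgeSet, ce e ∈ Set.Icc (0 : ℤ) k)}

/-- `G` is `L`-(p,1)-total labelable for list assignment `(Lv, Le)`. -/
def ListPOneTotalLabelable {V : Type*} (G : SimpleGraph V) (p : ℕ)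
    (Lv : V → Finset ℤ) (Le : G.edgeSet → Finset ℤ) : Prop :=
  ∃ cv ce, IsPOneTotalLabelling G p cv ce ∧ (∀ v, cv v ∈ Lv v) ∧ (∀ e, ce e ∈ Le e)

/-- C_{p,1}^T(G): least `k` such that `G` is `L`-(p,1)-total labelable for every list
assignment whose lists all have size `k`. -/
noncomputable def pOneTotalChoosability {V : Type*} (G : SimpleGraph V) (p : ℕ) : ℕ :=
  sInf {k : ℕ | ∀ (Lv : V → Finset ℤ) (Le : G.edgeSet → Finset ℤ),
    (∀ v, (Lv v).card = k) → (∀ e, (Le e).card = k) → ListPOneTotalLabelable G p Lv Le}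

/-- An L(p,q)-labelling of `H`. -/
def IsLpqLabelling {V : Type*} (H : SimpleGraph V) (p q : ℕ) (f : V → ℤ) : Prop :=
  (∀ u v : V, H.Adj u v → (p : ℤ) ≤ |f u - f v|) ∧
  (∀ u v : V, H.dist u v = 2 → (q : ℤ) ≤ |f u - f v|)

/-- χ^{p,q}(H): least `k` such that `H` has an L(p,q)-labelling with colors in `{0, …, k-1}`. -/
noncomputable def LpqChromatic {V : Type*} (H : SimpleGraph V) (p q : ℕ) : ℕ :=
  sInf {k : ℕ | ∃ f, IsLpqLabelling H p q f ∧ ∀ v : V, f v ∈ Set.Ico (0 : ℤ) k}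

/-- χ_l^{p,q}(H): least `k` such that from every assignment of lists of size `k`, `H` has an
L(p,q)-labelling choosing each vertex's color from its list. -/
noncomputable def listLpqChromatic {V : Type*} (H : SimpleGraph V) (p q : ℕ) : ℕ :=
  sInf {k : ℕ | ∀ L : V → Finset ℤ, (∀ v, (L v).card = k) →
    ∃ f, IsLpqLabelling H p q f ∧ ∀ v : V, f v ∈ L v}

/-- The star `K_{1,n}`: vertex `0` is the center, adjacent to the `n` leaves. -/
def starGraph (n : ℕ) : SimpleGraph (Fin (n + 1)) :=
  SimpleGraph.fromRel (fun v w => v = 0 ∨ w = 0)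

/-- The incidence graph `S_I(G)`: replace every edge of `G` by a path of length 2. -/
def incidenceGraph {V : Type*} (G : SimpleGraph V) : SimpleGraph (V ⊕ G.edgeSet) where
  Adj x y :=
    (∃ (v : V) (e : G.edgeSet), x = Sum.inl v ∧ y = Sum.inr e ∧ v ∈ (e : Sym2 V)) ∨
    (∃ (v : V) (e : G.edgeSet), x = Sum.inr e ∧ y = Sum.inl v ∧ v ∈ (e : Sym2 V))
  symm := by
    constructor
    rintro x y (⟨v, e, rfl, rfl, h⟩ | ⟨v, e, rfl, rfl, h⟩)
    · exact Or.inr ⟨v, e, rfl, rfl, h⟩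
    · exact Or.inl ⟨v, e, rfl, rfl, h⟩
  loopless := by
    constructor
    rintro x (⟨v, e, h1, h2, -⟩ | ⟨v, e, h1, h2, -⟩) <;> subst h1 <;> simp at h2

/-- `H` is a minor of `G`: there are pairwise disjoint nonempty connected branch sets in `G`,
one for each vertex of `H`, with an edge of `G` between the branch sets of any two vertices
adjacent in `H`. -/
def IsGraphMinor {W V : Type*} (H : SimpleGraph W) (G : SimpleGraph V) : Prop :=
  ∃ B : W → Set V,
    (∀ w, (B w).Nonempty) ∧
    (∀ w, (G.induce (B w)).Connected) ∧
    (∀ w₁ w₂, w₁ ≠ w₂ → Disjoint (B w₁) (B w₂)) ∧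
    (∀ w₁ w₂, H.Adj w₁ w₂ → ∃ v₁ ∈ B w₁, ∃ v₂ ∈ B w₂, G.Adj v₁ v₂)

/-- A graph is outerplanar iff it has neither `K₄` nor `K_{2,3}` as a minor. -/
def Outerplanar {V : Type*} (G : SimpleGraph V) : Prop :=
  ¬ IsGraphMinor (completeGraph (Fin 4)) G ∧
  ¬ IsGraphMinor (completeBipartiteGraph (Fin 2) (Fin 3)) G

set_option linter.unusedSectionVars false


/-- There is a color in any `2p+1`-list at distance ≥ p from `a` and distinct from `b`. -/
lemma pick_aux (p : ℕ) (hp : 1 ≤ p) {L : Finset ℤ} (hL : L.card = 2 * p + 1)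
    (a b : ℤ) : ∃ x ∈ L, (p : ℤ) ≤ |x - a| ∧ x ≠ b := by
  have hns : ¬ L ⊆ (Finset.Ico (a - p + 1) (a + p) ∪ {b}) := by
    intro h
    have h1 := Finset.card_le_card h
    have h2 : (Finset.Ico (a - p + 1) (a + p) ∪ ({b} : Finset ℤ)).card ≤
        (Finset.Ico (a - p + 1) (a + p)).card + 1 := by
      simpa using Finset.card_union_le (Finset.Ico (a - p + 1) (a + p)) {b}
    rw [Int.card_Ico] at h2
    omega
  obtain ⟨x, hxL, hxn⟩ := Finset.not_subset.mp hns
  rw [Finset.mem_union, Finset.mem_Ico, Finset.mem_singleton] at hxn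
  push_neg at hxn
  refine ⟨x, hxL, ?_, hxn.2⟩
  rw [le_abs]
  omega

noncomputable def pick (p : ℕ) (L : Finset ℤ) (a b : ℤ) : ℤ :=
  if h : ∃ x ∈ L, (p : ℤ) ≤ |x - a| ∧ x ≠ b then h.choose else 0

lemma pick_spec (p : ℕ) (hp : 1 ≤ p) {L : Finset ℤ} (hL : L.card = 2 * p + 1)
    (a b : ℤ) : pick p L a b ∈ L ∧ (p : ℤ) ≤ |pick p L a b - a| ∧ pick p L a b ≠ b := by
  have h := pick_aux p hp hL a b
  rw [pick, dif_pos h]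
  exact h.choose_spec

/-- Greedy sequence: `(seqF p Lv Le n).1` is the color of vertex `n`,
`(seqF p Lv Le n).2` the color of the edge `{n, n+1}`. -/
noncomputable def seqF (p : ℕ) (Lv Le : ℕ → Finset ℤ) : ℕ → ℤ × ℤ
  | 0 =>
      let c := pick p (Lv 0) 0 0
      (c, pick p (Le 0) c 0)
  | n + 1 =>
      let prev := seqF p Lv Le n
      let c := pick p (Lv (n + 1)) prev.2 prev.1
      (c, pick p (Le (n + 1)) c prev.2)

section
variable {p : ℕ} {Lv Le : ℕ → Finset ℤ} (hp : 1 ≤ p)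
    (hLv : ∀ n, (Lv n).card = 2 * p + 1) (hLe : ∀ n, (Le n).card = 2 * p + 1)

include hp hLv hLe

lemma seqF_mem_v (n : ℕ) : (seqF p Lv Le n).1 ∈ Lv n := by
  cases n with
  | zero => exact (pick_spec p hp (hLv 0) 0 0).1
  | succ m => exact (pick_spec p hp (hLv (m + 1)) _ _).1

lemma seqF_mem_e (n : ℕ) : (seqF p Lv Le n).2 ∈ Le n := by
  cases n with
  | zero => exact (pick_spec p hp (hLe 0) _ _).1
  | succ m => exact (pick_spec p hp (hLe (m + 1)) _ _).1

lemma seqF_dist (n : ℕ) : (p : ℤ) ≤ |(seqF p Lv Le n).1 - (seqF p Lv Le n).2| := by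
  rw [abs_sub_comm]
  cases n with
  | zero => exact (pick_spec p hp (hLe 0) _ _).2.1
  | succ m => exact (pick_spec p hp (hLe (m + 1)) _ _).2.1

lemma seqF_dist' (n : ℕ) :
    (p : ℤ) ≤ |(seqF p Lv Le (n + 1)).1 - (seqF p Lv Le n).2| :=
  (pick_spec p hp (hLv (n + 1)) _ _).2.1

lemma seqF_ne_v (n : ℕ) : (seqF p Lv Le (n + 1)).1 ≠ (seqF p Lv Le n).1 :=
  (pick_spec p hp (hLv (n + 1)) _ _).2.2

lemma seqF_ne_e (n : ℕ) : (seqF p Lv Le (n + 1)).2 ≠ (seqF p Lv Le n).2 :=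
  (pick_spec p hp (hLe (n + 1)) _ _).2.2

end

lemma pathEdge_mem {k i : ℕ} (h : i + 1 < k) :
    s(⟨i, Nat.lt_of_succ_lt h⟩, (⟨i + 1, h⟩ : Fin k)) ∈ (SimpleGraph.pathGraph k).edgeSet := by
  rw [SimpleGraph.mem_edgeSet, SimpleGraph.pathGraph_adj]
  left; rfl

lemma pathEdge_repr {k : ℕ} (e : (SimpleGraph.pathGraph k).edgeSet) :
    ∃ i : ℕ, ∃ h : i + 1 < k,
      (e : Sym2 (Fin k)) = s(⟨i, Nat.lt_of_succ_lt h⟩, ⟨i + 1, h⟩) := by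
  obtain ⟨e, he⟩ := e
  induction e using Sym2.ind with
  | _ u v =>
    rw [SimpleGraph.mem_edgeSet, SimpleGraph.pathGraph_adj] at he
    rcases he with h | h
    · refine ⟨u.val, h ▸ v.isLt, ?_⟩
      rw [Sym2.eq_iff]
      exact Or.inl ⟨Fin.ext rfl, Fin.ext h.symm⟩
    · refine ⟨v.val, h ▸ u.isLt, ?_⟩
      rw [Sym2.eq_iff]
      exact Or.inr ⟨Fin.ext h.symm, Fin.ext rfl⟩


/-- C_{p,1}^T(P_k) ≤ 2p + 1. -/
theorem pOneTotalChoosability_pathGraph_le (p k : ℕ) (hp : 1 ≤ p) :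
    pOneTotalChoosability (SimpleGraph.pathGraph k) p ≤ 2 * p + 1 := by
  refine Nat.sInf_le ?_
  intro Lv Le hLv hLe
  classical
  -- extend the lists to all of ℕ
  set Lv' : ℕ → Finset ℤ :=
    fun i => if h : i < k then Lv ⟨i, h⟩ else Finset.Ico 0 (2 * p + 1) with hLv'def
  set Le' : ℕ → Finset ℤ :=
    fun i => if h : i + 1 < k then Le ⟨_, pathEdge_mem h⟩ else Finset.Ico 0 (2 * p + 1)
    with hLe'def
  have hIco : (Finset.Ico (0 : ℤ) (2 * p + 1)).card = 2 * p + 1 := by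
    rw [Int.card_Ico]; omega
  have hLv' : ∀ n, (Lv' n).card = 2 * p + 1 := by
    intro n; rw [hLv'def]; dsimp only; split
    · exact hLv _
    · exact hIco
  have hLe' : ∀ n, (Le' n).card = 2 * p + 1 := by
    intro n; rw [hLe'def]; dsimp only; split
    · exact hLe _
    · exact hIco
  -- index of each edge
  choose idx hidx hrep using fun e => pathEdge_repr (k := k) e
  set cv : Fin k → ℤ := fun v => (seqF p Lv' Le' v.val).1 with hcv
  set ce : (SimpleGraph.pathGraph k).edgeSet → ℤ := fun e => (seqF p Lv' Le' (idx e)).2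
    with hce
  -- membership of a vertex in an edge, in terms of indices
  have hv_mem : ∀ (v : Fin k) (e : (SimpleGraph.pathGraph k).edgeSet),
      v ∈ (e : Sym2 (Fin k)) → v.val = idx e ∨ v.val = idx e + 1 := by
    intro v e hv
    rw [hrep e, Sym2.mem_iff] at hv
    rcases hv with h | h <;> [left; right] <;> rw [h]
  refine ⟨cv, ce, ⟨?_, ?_, ?_⟩, ?_, ?_⟩
  · -- adjacent vertices
    intro u v huv
    rw [SimpleGraph.pathGraph_adj] at huv
    rcases huv with h | h
    · rw [hcv]; dsimp only; rw [← h]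
      exact (seqF_ne_v hp hLv' hLe' u.val).symm
    · rw [hcv]; dsimp only; rw [← h]
      exact seqF_ne_v hp hLv' hLe' v.val
  · -- edges sharing an endpoint
    intro e f hef ⟨v, hve, hvf⟩
    have h1 := hv_mem v e hve
    have h2 := hv_mem v f hvf
    have h3 : idx e ≠ idx f := by
      intro h
      apply hef
      apply Subtype.ext
      rw [hrep e, hrep f, Sym2.eq_iff]
      exact Or.inl ⟨Fin.ext h, Fin.ext (by simp [h])⟩
    have : idx e = idx f + 1 ∨ idx f = idx e + 1 := by omega
    rcases this with h | h
    · rw [hce]; dsimp only; rw [h]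
      exact seqF_ne_e hp hLv' hLe' (idx f)
    · rw [hce]; dsimp only; rw [h]
      exact (seqF_ne_e hp hLv' hLe' (idx e)).symm
  · -- vertex vs incident edge
    intro v e hv
    rcases hv_mem v e hv with h | h
    · rw [hcv, hce]; dsimp only; rw [h]
      exact seqF_dist hp hLv' hLe' (idx e)
    · rw [hcv, hce]; dsimp only; rw [h]
      exact seqF_dist' hp hLv' hLe' (idx e)
  · -- vertex colors in lists
    intro v
    have := seqF_mem_v hp hLv' hLe' v.val
    rw [hLv'def] at this
    simpa [v.isLt] using this
  · -- edge colors in lists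
    intro e
    have := seqF_mem_e hp hLv' hLe' (idx e)
    rw [hLe'def] at this
    dsimp only at this
    rw [dif_pos (hidx e)] at this
    convert this using 2
    exact Subtype.ext (hrep e)
end

section
/- Let P_k denote the path on k vertices and let p ≥ 1 be an integer. If k > p, then C_{p,1}^T(P_k) ≥ 2p. -/
open SimpleGraph

section AuxLemmas

/-- Choose an element of `L` avoiding `bad`. -/
def pickAvoid (L bad : Finset ℤ) : ℤ :=
  if h : (L \ bad).Nonempty then (L \ bad).min' h else 0

lemma pickAvoid_spec {L bad : Finset ℤ} (h : bad.card < L.card) :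
    pickAvoid L bad ∈ L ∧ pickAvoid L bad ∉ bad := by
  have hne : (L \ bad).Nonempty := by
    rw [← Finset.card_pos]
    have := Finset.le_card_sdiff bad L
    omega
  have hm := (L \ bad).min'_mem hne
  rw [Finset.mem_sdiff] at hm
  rw [pickAvoid, dif_pos hne]
  exact hm

/-- Colors at distance `< p` from `c`, plus one extra forbidden color `d`. -/
noncomputable def badSet (p : ℕ) (c d : ℤ) : Finset ℤ := insert d (Finset.Ioo (c - p) (c + p))

lemma badSet_card_le {p : ℕ} (hp : 1 ≤ p) (c d : ℤ) : (badSet p c d).card ≤ 2 * p := by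
  rw [badSet]
  calc (insert d (Finset.Ioo (c - (p:ℤ)) (c + p))).card
      ≤ (Finset.Ioo (c - (p:ℤ)) (c + p)).card + 1 := Finset.card_insert_le _ _
    _ = (2 * (p:ℤ) - 1).toNat + 1 := by rw [Int.card_Ioo]; congr 2; ring
    _ ≤ 2 * p := by omega

lemma not_mem_badSet {p : ℕ} {c d x : ℤ} (h : x ∉ badSet p c d) :
    x ≠ d ∧ (p : ℤ) ≤ |x - c| := by
  rw [badSet, Finset.mem_insert, Finset.mem_Ioo] at h
  push_neg at h
  refine ⟨h.1, ?_⟩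
  have h2 : x ≤ c - p ∨ c + p ≤ x := by
    rcases lt_or_ge (c - (p:ℤ)) x with h'|h'
    · exact Or.inr (h.2 h')
    · exact Or.inl h'
  rcases h2 with h2 | h2
  · rw [abs_sub_comm]
    calc (p : ℤ) ≤ c - x := by omega
      _ ≤ |c - x| := le_abs_self _
  · calc (p : ℤ) ≤ x - c := by omega
      _ ≤ |x - c| := le_abs_self _

/-- Greedy labelling of a path: `(greedy p LV LE i).1` is the color of vertex `i`, and
`(greedy p LV LE (i+1)).2` is the color of the edge between vertices `i` and `i+1`. -/
noncomputable def greedy (p : ℕ) (LV LE : ℕ → Finset ℤ) : ℕ → ℤ × ℤ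
  | 0 => (pickAvoid (LV 0) ∅, 0)
  | (i+1) =>
      (pickAvoid (LV (i+1))
        (badSet p (pickAvoid (LE i) (badSet p (greedy p LV LE i).1 (greedy p LV LE i).2))
          (greedy p LV LE i).1),
       pickAvoid (LE i) (badSet p (greedy p LV LE i).1 (greedy p LV LE i).2))

lemma greedy_spec {p : ℕ} {LV LE : ℕ → Finset ℤ} (hp : 1 ≤ p)
    (hv : ∀ j, 2 * p < (LV j).card) (he : ∀ i, 2 * p < (LE i).card) (i : ℕ) :
    (greedy p LV LE (i+1)).1 ∈ LV (i+1) ∧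
    (greedy p LV LE (i+1)).2 ∈ LE i ∧
    (greedy p LV LE (i+1)).1 ≠ (greedy p LV LE i).1 ∧
    (greedy p LV LE (i+1)).2 ≠ (greedy p LV LE i).2 ∧
    (p : ℤ) ≤ |(greedy p LV LE (i+1)).1 - (greedy p LV LE (i+1)).2| ∧
    (p : ℤ) ≤ |(greedy p LV LE (i+1)).2 - (greedy p LV LE i).1| := by
  have hbe : (badSet p (greedy p LV LE i).1 (greedy p LV LE i).2).card < (LE i).card :=
    Nat.lt_of_le_of_lt (badSet_card_le hp _ _) (he i)
  have he' := pickAvoid_spec hbe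
  have hbv : (badSet p (pickAvoid (LE i) (badSet p (greedy p LV LE i).1 (greedy p LV LE i).2))
      (greedy p LV LE i).1).card < (LV (i+1)).card :=
    Nat.lt_of_le_of_lt (badSet_card_le hp _ _) (hv (i+1))
  have hv' := pickAvoid_spec hbv
  obtain ⟨hen, heabs⟩ := not_mem_badSet he'.2
  obtain ⟨hvn, hvabs⟩ := not_mem_badSet hv'.2
  rw [greedy]
  exact ⟨hv'.1, he'.1, hvn, hen, hvabs, heabs⟩

lemma greedy_vmem {p : ℕ} {LV LE : ℕ → Finset ℤ} (hp : 1 ≤ p)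
    (hv : ∀ j, 2 * p < (LV j).card) (he : ∀ i, 2 * p < (LE i).card) (i : ℕ) :
    (greedy p LV LE i).1 ∈ LV i := by
  cases i with
  | zero =>
      have h0 : (∅ : Finset ℤ).card < (LV 0).card := by
        rw [Finset.card_empty]; exact Nat.lt_of_le_of_lt (Nat.zero_le _) (hv 0)
      have := pickAvoid_spec h0
      rw [greedy]
      exact this.1
  | succ i => exact (greedy_spec hp hv he i).1

/-- The `i`-th edge of the path graph. -/
def pgEdge (k i : ℕ) (h : i + 1 < k) : (SimpleGraph.pathGraph k).edgeSet :=
  ⟨s(⟨i, Nat.lt_of_succ_lt h⟩, ⟨i+1, h⟩), by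
    rw [SimpleGraph.mem_edgeSet, SimpleGraph.pathGraph_adj]; left; rfl⟩

lemma pgEdge_exists {k : ℕ} (e : (SimpleGraph.pathGraph k).edgeSet) :
    ∃ (i : ℕ) (h : i + 1 < k), e = pgEdge k i h := by
  obtain ⟨s, hs⟩ := e
  revert hs
  induction s using Sym2.ind with
  | _ u v =>
    intro hs
    rw [SimpleGraph.mem_edgeSet, SimpleGraph.pathGraph_adj] at hs
    rcases hs with h | h
    · have hlt : u.val + 1 < k := by have := v.isLt; omega
      refine ⟨u.val, hlt, ?_⟩
      apply Subtype.ext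
      show s(u, v) = s(⟨u.val, _⟩, ⟨u.val + 1, hlt⟩)
      have hv : v = (⟨u.val + 1, hlt⟩ : Fin k) := Fin.ext h.symm
      rw [hv]
    · have hlt : v.val + 1 < k := by have := u.isLt; omega
      refine ⟨v.val, hlt, ?_⟩
      apply Subtype.ext
      show s(u, v) = s(⟨v.val, _⟩, ⟨v.val + 1, hlt⟩)
      rw [Sym2.eq_swap]
      have hu : u = (⟨v.val + 1, hlt⟩ : Fin k) := Fin.ext h.symm
      rw [hu]

lemma pgEdge_inf {k i : ℕ} (h : i + 1 < k) :
    (Sym2.inf ((pgEdge k i h : (SimpleGraph.pathGraph k).edgeSet) : Sym2 (Fin k))).val = i := by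
  show (Sym2.inf s(⟨i, Nat.lt_of_succ_lt h⟩, (⟨i+1, h⟩ : Fin k))).val = i
  rw [Sym2.inf_mk]
  have h2 : (⟨i, Nat.lt_of_succ_lt h⟩ : Fin k) ⊓ ⟨i+1, h⟩ = ⟨i, Nat.lt_of_succ_lt h⟩ :=
    inf_eq_left.2 (by rw [Fin.le_def]; exact Nat.le_succ i)
  rw [h2]

lemma pgEdge_mem_iff {k i : ℕ} (h : i + 1 < k) (v : Fin k) :
    v ∈ ((pgEdge k i h : (SimpleGraph.pathGraph k).edgeSet) : Sym2 (Fin k)) ↔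
      v.val = i ∨ v.val = i + 1 := by
  show v ∈ s(⟨i, Nat.lt_of_succ_lt h⟩, (⟨i+1, h⟩ : Fin k)) ↔ _
  rw [Sym2.mem_iff]
  simp [Fin.ext_iff]

end AuxLemmas


/-- if k > p then C_{p,1}^T(P_k) ≥ 2p. -/
theorem pOneTotalChoosability_pathGraph_ge (p k : ℕ) (hp : 1 ≤ p) (hk : p < k) :
    2 * p ≤ pOneTotalChoosability (SimpleGraph.pathGraph k) p := by
  classical
  rw [pOneTotalChoosability]
  refine le_csInf ⟨2 * p + 1, ?_⟩ ?_
  · -- `2p+1` colors always suffice (greedy), so the set is nonempty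
    simp only [Set.mem_setOf_eq]
    intro Lv Le hLv hLe
    set LV : ℕ → Finset ℤ := fun j =>
      if h : j < k then Lv ⟨j, h⟩ else Finset.Ico 0 (2 * p + 1) with hLV
    set LE : ℕ → Finset ℤ := fun i =>
      if h : i + 1 < k then Le (pgEdge k i h) else Finset.Ico 0 (2 * p + 1) with hLE
    have hvc : ∀ j, 2 * p < (LV j).card := by
      intro j
      simp only [hLV]
      by_cases h : j < k
      · rw [dif_pos h, hLv]; omega
      · rw [dif_neg h, Int.card_Ico]; omega
    have hec : ∀ i, 2 * p < (LE i).card := by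
      intro i
      simp only [hLE]
      by_cases h : i + 1 < k
      · rw [dif_pos h, hLe]; omega
      · rw [dif_neg h, Int.card_Ico]; omega
    refine ⟨fun v => (greedy p LV LE v.val).1,
            fun e => (greedy p LV LE ((Sym2.inf (e : Sym2 (Fin k))).val + 1)).2,
            ⟨?_, ?_, ?_⟩, ?_, ?_⟩
    · -- adjacent vertices
      intro u v hadj
      dsimp only
      rw [SimpleGraph.pathGraph_adj] at hadj
      rcases hadj with h | h
      · rw [← h]
        exact ((greedy_spec hp hvc hec u.val).2.2.1).symm
      · rw [← h]
        exact (greedy_spec hp hvc hec v.val).2.2.1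
    · -- adjacent edges
      intro e f hef hshare
      obtain ⟨i, hi, rfl⟩ := pgEdge_exists e
      obtain ⟨j, hj, rfl⟩ := pgEdge_exists f
      have hij : i ≠ j := by
        rintro rfl
        exact hef rfl
      obtain ⟨w, hw1, hw2⟩ := hshare
      rw [pgEdge_mem_iff] at hw1 hw2
      dsimp only
      rw [pgEdge_inf, pgEdge_inf]
      have hcase : j = i + 1 ∨ i = j + 1 := by omega
      rcases hcase with rfl | rfl
      · exact ((greedy_spec hp hvc hec (i + 1)).2.2.2.1).symm
      · exact (greedy_spec hp hvc hec (j + 1)).2.2.2.1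
    · -- vertex-edge distance
      intro v e hve
      obtain ⟨i, hi, rfl⟩ := pgEdge_exists e
      rw [pgEdge_mem_iff] at hve
      dsimp only
      rw [pgEdge_inf]
      rcases hve with h | h
      · rw [h, abs_sub_comm]
        exact (greedy_spec hp hvc hec i).2.2.2.2.2
      · rw [h]
        exact (greedy_spec hp hvc hec i).2.2.2.2.1
    · -- vertex colors in lists
      intro v
      have hmem := greedy_vmem hp hvc hec v.val
      simp only [hLV] at hmem
      rw [dif_pos v.isLt] at hmem
      dsimp only
      simpa using hmem
    · -- edge colors in lists
      intro e
      obtain ⟨i, hi, rfl⟩ := pgEdge_exists e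
      dsimp only
      rw [pgEdge_inf]
      have hmem := (greedy_spec hp hvc hec i).2.1
      simp only [hLE] at hmem
      rw [dif_pos hi] at hmem
      exact hmem
  · -- every admissible size is at least `2p`
    intro m hm
    simp only [Set.mem_setOf_eq] at hm
    by_contra hcon
    push_neg at hcon
    set Lv : Fin k → Finset ℤ := fun v => Finset.Ico (v.val : ℤ) (v.val + m) with hLvd
    set Le : (SimpleGraph.pathGraph k).edgeSet → Finset ℤ := fun e =>
      Finset.Ico ((p : ℤ) - (Sym2.inf (e : Sym2 (Fin k))).val)
        ((p : ℤ) - (Sym2.inf (e : Sym2 (Fin k))).val + m) with hLed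
    obtain ⟨cv, ce, ⟨h1, h2, h3⟩, hcv, hce⟩ :=
      hm Lv Le (fun v => by simp only [hLvd]; rw [Int.card_Ico]; omega)
        (fun e => by simp only [hLed]; rw [Int.card_Ico]; omega)
    have key : ∀ i : ℕ, ∀ h : i < k, i ≤ p → cv ⟨i, h⟩ ≤ 2 * (p : ℤ) - 1 - i := by
      intro i
      induction i with
      | zero =>
          intro h _
          have hmem := hcv ⟨0, h⟩
          simp only [hLvd] at hmem
          rw [Finset.mem_Ico] at hmem
          simp only [Fin.val_mk, Nat.cast_zero] at hmem ⊢
          omega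
      | succ i ih =>
          intro h hip
          have hi : i < k := by omega
          have hb := hce (pgEdge k i h)
          simp only [hLed] at hb
          rw [Finset.mem_Ico] at hb
          rw [pgEdge_inf] at hb
          have hA := h3 ⟨i, hi⟩ (pgEdge k i h) (by rw [pgEdge_mem_iff]; left; rfl)
          have hB := h3 ⟨i + 1, h⟩ (pgEdge k i h) (by rw [pgEdge_mem_iff]; right; rfl)
          have hvi := hcv ⟨i, hi⟩
          have hvi1 := hcv ⟨i + 1, h⟩
          simp only [hLvd] at hvi hvi1
          rw [Finset.mem_Ico] at hvi hvi1
          have ihh := ih hi (by omega)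
          have hA' := le_abs.1 hA
          have hB' := le_abs.1 hB
          push_cast at hvi hvi1 hb ⊢
          omega
    have hfin := key p hk le_rfl
    have hmem := hcv ⟨p, hk⟩
    simp only [hLvd] at hmem
    rw [Finset.mem_Ico] at hmem
    omega
end

section
/- Let K_{1,n} be the star with n ≥ 1 leaves and let p ≥ 1 be an integer. Then χ_{p,1}^T(K_{1,n}) = n + p if p < n, and χ_{p,1}^T(K_{1,n}) = n + p + 1 if p ≥ n. -/
open SimpleGraph

-- helper lemmas
lemma starGraph_adj (n : ℕ) (v w : Fin (n+1)) :
    (_root_.starGraph n).Adj v w ↔ v ≠ w ∧ (v = 0 ∨ w = 0) := by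
  simp only [_root_.starGraph, fromRel_adj]
  tauto

lemma edge_rep (n : ℕ) (e : (_root_.starGraph n).edgeSet) :
    ∃ i : Fin (n+1), i ≠ 0 ∧ (e : Sym2 (Fin (n+1))) = s(0, i) := by
  obtain ⟨e, he⟩ := e
  induction e using Sym2.ind with
  | _ v w =>
    rw [SimpleGraph.mem_edgeSet, _root_.starGraph_adj] at he
    obtain ⟨hvw, hv | hw⟩ := he
    · subst hv
      exact ⟨w, fun h => hvw h.symm, rfl⟩
    · subst hw
      exact ⟨v, fun h => hvw h, Sym2.eq_swap⟩

noncomputable def tip (n : ℕ) (e : (_root_.starGraph n).edgeSet) : Fin (n+1) :=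
  (edge_rep n e).choose

lemma tip_ne (n : ℕ) (e : (_root_.starGraph n).edgeSet) : tip n e ≠ 0 :=
  (edge_rep n e).choose_spec.1

lemma tip_spec (n : ℕ) (e : (_root_.starGraph n).edgeSet) :
    (e : Sym2 (Fin (n+1))) = s(0, tip n e) :=
  (edge_rep n e).choose_spec.2

lemma zero_mem (n : ℕ) (e : (_root_.starGraph n).edgeSet) :
    (0 : Fin (n+1)) ∈ (e : Sym2 (Fin (n+1))) := by
  rw [tip_spec]; exact Sym2.mem_mk_left _ _

lemma tip_mem (n : ℕ) (e : (_root_.starGraph n).edgeSet) :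
    tip n e ∈ (e : Sym2 (Fin (n+1))) := by
  rw [tip_spec]; exact Sym2.mem_mk_right _ _

lemma mem_edge_iff (n : ℕ) (e : (_root_.starGraph n).edgeSet) (v : Fin (n+1)) :
    v ∈ (e : Sym2 (Fin (n+1))) ↔ v = 0 ∨ v = tip n e := by
  rw [tip_spec, Sym2.mem_iff]

lemma tip_inj (n : ℕ) : Function.Injective (tip n) := by
  intro e f h
  apply Subtype.ext
  rw [tip_spec, tip_spec, h]

noncomputable instance (n : ℕ) : Fintype ((_root_.starGraph n).edgeSet) := Fintype.ofFinite _

noncomputable def starEquiv (n : ℕ) : (_root_.starGraph n).edgeSet ≃ {i : Fin (n+1) // i ≠ 0} where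
  toFun e := ⟨tip n e, tip_ne n e⟩
  invFun i := ⟨s(0, i.1), by
    rw [SimpleGraph.mem_edgeSet, _root_.starGraph_adj]
    exact ⟨Ne.symm i.2, Or.inl rfl⟩⟩
  left_inv e := Subtype.ext (tip_spec n e).symm
  right_inv i := by
    obtain ⟨i, hi⟩ := i
    apply Subtype.ext
    have h := tip_spec n ⟨s(0, i), by
      rw [SimpleGraph.mem_edgeSet, _root_.starGraph_adj]
      exact ⟨Ne.symm hi, Or.inl rfl⟩⟩
    simp only [Sym2.eq_iff] at h
    rcases h with ⟨-, h⟩ | ⟨h, h'⟩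
    · exact h.symm
    · exact absurd h.symm (tip_ne n _)

lemma card_edgeSet (n : ℕ) : Fintype.card ((_root_.starGraph n).edgeSet) = n := by
  rw [Fintype.card_congr (starEquiv n)]
  simp

lemma count_bound (n p k : ℕ) (cv : Fin (n+1) → ℤ) (ce : (_root_.starGraph n).edgeSet → ℤ)
    (h : IsPOneTotalLabelling (_root_.starGraph n) p cv ce)
    (hce : ∀ e : (_root_.starGraph n).edgeSet, ce e ∈ Set.Ico (0 : ℤ) k) :
    n ≤ (cv 0 - p + 1).toNat + ((k : ℤ) - cv 0 - p).toNat := by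
  set x := cv 0 with hx
  have hmem : ∀ e : (_root_.starGraph n).edgeSet,
      ce e ∈ Finset.Ico (0:ℤ) (x - p + 1) ∪ Finset.Ico (x + p) k := by
    intro e
    have h1 := hce e
    have h2 := h.2.2 0 e (zero_mem n e)
    simp only [Set.mem_Ico] at h1
    simp only [Finset.mem_union, Finset.mem_Ico]
    rcases abs_cases (x - ce e) with ⟨ha, -⟩ | ⟨ha, -⟩ <;> rw [ha] at h2 <;> omega
  have hinj : Set.InjOn ce (Finset.univ : Finset (_root_.starGraph n).edgeSet) := by
    intro e _ f _ hef
    by_contra hne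
    exact h.2.1 e f hne ⟨0, zero_mem n e, zero_mem n f⟩ hef
  have hcard := Finset.card_le_card_of_injOn ce (fun e _ => hmem e) hinj
  rw [Finset.card_univ, _root_.card_edgeSet] at hcard
  calc n ≤ _ := hcard
    _ ≤ _ := Finset.card_union_le _ _
    _ = _ := by rw [Int.card_Ico, Int.card_Ico]; ring_nf

lemma tip_val_pos (n : ℕ) (e : (_root_.starGraph n).edgeSet) : 1 ≤ (tip n e).val := by
  have := tip_ne n e
  have h : (tip n e).val ≠ 0 := fun h => this (Fin.ext h)
  omega

lemma tip_val_le (n : ℕ) (e : (_root_.starGraph n).edgeSet) : (tip n e).val ≤ n := by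
  have := (tip n e).isLt; omega


/-- χ_{p,1}^T(K_{1,n}) = n + p if p < n, and = n + p + 1 if p ≥ n. -/
theorem pOneTotalChromatic_starGraph (n p : ℕ) (hn : 1 ≤ n) (hp : 1 ≤ p) :
    (p < n → pOneTotalChromatic (_root_.starGraph n) p = n + p) ∧
    (n ≤ p → pOneTotalChromatic (_root_.starGraph n) p = n + p + 1) := by
  constructor
  · intro hpn
    have hmem : (n + p) ∈ {k : ℕ | ∃ cv ce, IsPOneTotalLabelling (_root_.starGraph n) p cv ce ∧
        (∀ v : Fin (n+1), cv v ∈ Set.Ico (0 : ℤ) k) ∧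
        (∀ e : (_root_.starGraph n).edgeSet, ce e ∈ Set.Ico (0 : ℤ) k)} := by
      refine ⟨fun i => if i.val = 0 then 0 else if i.val = 1 then (2*p : ℤ) else (i.val : ℤ) - 1,
        fun e => (p : ℤ) - 1 + ((tip n e).val : ℤ), ⟨?_, ?_, ?_⟩, ?_, ?_⟩
      · intro u v huv
        rw [_root_.starGraph_adj] at huv
        obtain ⟨hne, h0 | h0⟩ := huv <;> subst h0
        · have hv : v.val ≠ 0 := fun h => hne (Fin.ext h).symm
          simp only [Fin.val_zero, if_pos rfl, if_true]
          split_ifs <;> omega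
        · have hv : u.val ≠ 0 := fun h => hne (Fin.ext h)
          simp only [Fin.val_zero, if_pos rfl]
          split <;> split <;> omega
      · intro e f hef _
        intro hc
        dsimp only at hc
        apply hef
        apply tip_inj n
        apply Fin.ext
        omega
      · intro v e hv
        rw [mem_edge_iff] at hv
        have t1 := tip_val_pos n e
        have t2 := tip_val_le n e
        rcases hv with rfl | rfl
        · simp only [Fin.val_zero, if_pos rfl]
          rw [le_abs]; right; push_cast; omega
        · rw [le_abs]
          have hv0 : (tip n e).val ≠ 0 := by omega
          by_cases h1 : (tip n e).val = 1
          · simp only [if_neg hv0, if_pos h1]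
            left; push_cast; omega
          · simp only [if_neg hv0, if_neg h1]
            right; push_cast; omega
      · intro v
        simp only [Set.mem_Ico]
        have := v.isLt
        split <;> [skip; split] <;> refine ⟨by omega, by omega⟩
      · intro e
        have t1 := tip_val_pos n e
        have t2 := tip_val_le n e
        simp only [Set.mem_Ico]
        push_cast
        omega
    refine le_antisymm (Nat.sInf_le hmem) (le_csInf ⟨_, hmem⟩ ?_)
    rintro k ⟨cv, ce, h, hv, he⟩
    by_contra hlt
    push_neg at hlt
    have hcount := count_bound n p k cv ce h he
    have hx := hv 0
    simp only [Set.mem_Ico] at hx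
    omega
  · intro hpn
    have hmem : (n + p + 1) ∈ {k : ℕ | ∃ cv ce, IsPOneTotalLabelling (_root_.starGraph n) p cv ce ∧
        (∀ v : Fin (n+1), cv v ∈ Set.Ico (0 : ℤ) k) ∧
        (∀ e : (_root_.starGraph n).edgeSet, ce e ∈ Set.Ico (0 : ℤ) k)} := by
      refine ⟨fun i => (i.val : ℤ), fun e => (p : ℤ) + ((tip n e).val : ℤ), ⟨?_, ?_, ?_⟩, ?_, ?_⟩
      · intro u v huv hc
        rw [_root_.starGraph_adj] at huv
        dsimp only at hc
        exact huv.1 (Fin.ext (by exact_mod_cast hc))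
      · intro e f hef _ hc
        dsimp only at hc
        apply hef
        apply tip_inj n
        apply Fin.ext
        omega
      · intro v e hv
        rw [mem_edge_iff] at hv
        have t1 := tip_val_pos n e
        rcases hv with rfl | rfl
        · simp only [Fin.val_zero]
          rw [le_abs]; right; push_cast; omega
        · rw [le_abs]; right; push_cast; omega
      · intro v
        simp only [Set.mem_Ico]
        have := v.isLt
        push_cast; omega
      · intro e
        have t2 := tip_val_le n e
        simp only [Set.mem_Ico]
        push_cast; omega
    refine le_antisymm (Nat.sInf_le hmem) (le_csInf ⟨_, hmem⟩ ?_)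
    rintro k ⟨cv, ce, h, hv, he⟩
    by_contra hlt
    push_neg at hlt
    have hcount := count_bound n p k cv ce h he
    have hx := hv 0
    simp only [Set.mem_Ico] at hx
    -- k = n + p and cv 0 = 0 or cv 0 = n + p - 1
    have hk : k = n + p ∧ (cv 0 = 0 ∨ cv 0 = (n : ℤ) + p - 1) := by omega
    obtain ⟨rfl, h0 | h0⟩ := hk
    · -- center colored 0; edges fill [p, n+p); edge colored p gives stuck leaf
      have himg : Finset.image ce Finset.univ = Finset.Ico (p : ℤ) ((n : ℤ) + p) := by
        apply Finset.eq_of_subset_of_card_le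
        · intro c hc
          simp only [Finset.mem_image] at hc
          obtain ⟨e, -, rfl⟩ := hc
          have h1 := he e
          have h2 := h.2.2 0 e (zero_mem n e)
          rw [h0] at h2
          simp only [Set.mem_Ico] at h1
          simp only [Finset.mem_Ico]
          rcases abs_cases (0 - ce e) with ⟨ha, -⟩ | ⟨ha, -⟩ <;> rw [ha] at h2 <;> push_cast at h1 ⊢ <;> omega
        · rw [Int.card_Ico, Finset.card_image_of_injOn, Finset.card_univ, _root_.card_edgeSet]
          · omega
          · intro e _ f _ hef
            by_contra hne
            exact h.2.1 e f hne ⟨0, zero_mem n e, zero_mem n f⟩ hef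
      have hpmem : (p : ℤ) ∈ Finset.image ce Finset.univ := by
        rw [himg]; simp only [Finset.mem_Ico]; push_cast; omega
      simp only [Finset.mem_image] at hpmem
      obtain ⟨e, -, hcep⟩ := hpmem
      have hvm := h.2.2 (tip n e) e (tip_mem n e)
      rw [hcep] at hvm
      have hadj : (_root_.starGraph n).Adj 0 (tip n e) := by
        rw [_root_.starGraph_adj]
        exact ⟨Ne.symm (tip_ne n e), Or.inl rfl⟩
      have hne0 := h.1 0 (tip n e) hadj
      rw [h0] at hne0
      have hb := hv (tip n e)
      simp only [Set.mem_Ico] at hb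
      rcases abs_cases (cv (tip n e) - p) with ⟨ha, -⟩ | ⟨ha, -⟩ <;> rw [ha] at hvm <;>
        push_cast at hb <;> omega
    · -- center colored n+p-1; edges fill [0, n); edge colored n-1 gives stuck leaf
      have himg : Finset.image ce Finset.univ = Finset.Ico (0 : ℤ) (n : ℤ) := by
        apply Finset.eq_of_subset_of_card_le
        · intro c hc
          simp only [Finset.mem_image] at hc
          obtain ⟨e, -, rfl⟩ := hc
          have h1 := he e
          have h2 := h.2.2 0 e (zero_mem n e)
          rw [h0] at h2
          simp only [Set.mem_Ico] at h1
          simp only [Finset.mem_Ico]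
          rcases abs_cases ((n : ℤ) + p - 1 - ce e) with ⟨ha, -⟩ | ⟨ha, -⟩ <;> rw [ha] at h2 <;>
            push_cast at h1 ⊢ <;> omega
        · rw [Int.card_Ico, Finset.card_image_of_injOn, Finset.card_univ, _root_.card_edgeSet]
          · omega
          · intro e _ f _ hef
            by_contra hne
            exact h.2.1 e f hne ⟨0, zero_mem n e, zero_mem n f⟩ hef
      have hpmem : ((n : ℤ) - 1) ∈ Finset.image ce Finset.univ := by
        rw [himg]; simp only [Finset.mem_Ico]; omega
      simp only [Finset.mem_image] at hpmem
      obtain ⟨e, -, hcep⟩ := hpmem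
      have hvm := h.2.2 (tip n e) e (tip_mem n e)
      rw [hcep] at hvm
      have hadj : (_root_.starGraph n).Adj 0 (tip n e) := by
        rw [_root_.starGraph_adj]
        exact ⟨Ne.symm (tip_ne n e), Or.inl rfl⟩
      have hne0 := h.1 0 (tip n e) hadj
      rw [h0] at hne0
      have hb := hv (tip n e)
      simp only [Set.mem_Ico] at hb
      rcases abs_cases (cv (tip n e) - ((n : ℤ) - 1)) with ⟨ha, -⟩ | ⟨ha, -⟩ <;> rw [ha] at hvm <;>
        push_cast at hb <;> omega
end

section
/- Let T be a finite tree (a connected acyclic simple graph) with maximum degree Δ and let p be an integer with 1 ≤ p ≤ Δ. If there exists a vertex v of T such that v and all of its neighbors have degree Δ, then χ_l^{p,1}(T) = Δ + 2p − 1. -/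
open SimpleGraph

section TreeLpqAux

universe u

variable {V : Type*}

lemma triangle_cycle {T : SimpleGraph V} {u x w : V} (hux : u ≠ x)
    (hu : T.Adj u w) (hx : T.Adj x w) (h : T.Adj u x) :
    ((Walk.cons h (Walk.cons hx (Walk.cons hu.symm Walk.nil))) : T.Walk u u).IsCycle := by
  have h1 : u ≠ w := hu.ne
  have h2 : x ≠ w := hx.ne
  constructor
  · constructor
    · simp [Walk.edges_cons, List.nodup_cons, Sym2.eq_iff]
      tauto
    · simp
  · simp only [Walk.support_cons, Walk.support_nil, List.tail_cons, List.nodup_cons,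
      List.mem_cons, List.mem_singleton, List.not_mem_nil]
    tauto

lemma tree_not_adj {T : SimpleGraph V} (hT : T.IsAcyclic) {u x w : V}
    (hux : u ≠ x) (hu : T.Adj u w) (hx : T.Adj x w) : ¬ T.Adj u x :=
  fun h => hT _ (triangle_cycle hux hu hx h)

lemma dist_eq_two' {T : SimpleGraph V} (hc : T.Connected) {u x w : V} (hux : u ≠ x)
    (hnadj : ¬ T.Adj u x) (h1 : T.Adj u w) (h2 : T.Adj w x) : T.dist u x = 2 := by
  have hle : T.dist u x ≤ 2 := by
    simpa using SimpleGraph.dist_le (Walk.cons h1 (Walk.cons h2 Walk.nil))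
  have h0 : T.dist u x ≠ 0 := by
    rw [Ne, hc.dist_eq_zero_iff]; exact hux
  have h1' : T.dist u x ≠ 1 := by
    rw [Ne, dist_eq_one_iff_adj]; exact hnadj
  omega

lemma path_internal_two_neighbors {T : SimpleGraph V} :
    ∀ {a b : V} (P : T.Walk a b), P.IsPath → ∀ y ∈ P.support, y ≠ a → y ≠ b →
      ∃ z₁ z₂, z₁ ≠ z₂ ∧ T.Adj y z₁ ∧ T.Adj y z₂ := by
  intro a b P
  induction P with
  | nil => intro _ y hy hya _; simp at hy; exact absurd hy hya
  | @cons a c b h q ih =>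
    intro hP y hy hya hyb
    rw [Walk.support_cons, List.mem_cons] at hy
    rcases hy with rfl | hy
    · exact absurd rfl hya
    by_cases hyc : y = c
    · subst hyc
      cases q with
      | nil => exact absurd rfl hyb
      | @cons _ e _ h2 q2 =>
        refine ⟨a, e, ?_, h.symm, h2⟩
        intro hae
        have : a ∉ (Walk.cons h2 q2).support := (Walk.cons_isPath_iff h _).mp hP |>.2
        exact this (by subst hae; simp [Walk.support_cons])
    · exact ih ((Walk.cons_isPath_iff h q).mp hP).1 y hy hyc hyb

lemma exists_leaf [Fintype V] (T : SimpleGraph V) [DecidableRel T.Adj]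
    (hT : T.IsTree) (h2 : 2 ≤ Fintype.card V) : ∃ v, T.degree v = 1 := by
  classical
  by_contra hno
  push_neg at hno
  have hpos : ∀ v, 1 ≤ T.degree v := by
    intro v
    rw [Nat.one_le_iff_ne_zero, Ne, ← Nat.le_zero, Nat.not_le, degree_pos_iff_exists_adj]
    obtain ⟨u, hu⟩ := Fintype.exists_ne_of_one_lt_card (by omega) v
    obtain ⟨W⟩ := hT.1.preconnected v u
    cases W with
    | nil => exact absurd rfl hu.symm
    | cons h q => exact ⟨_, h⟩
  have hge : ∀ v, 2 ≤ T.degree v := by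
    intro v
    have := hpos v; have := hno v; omega
  have hsum := T.sum_degrees_eq_twice_card_edges
  have hedge := hT.card_edgeFinset
  have hlow : 2 * Fintype.card V ≤ ∑ v, T.degree v := by
    calc 2 * Fintype.card V = ∑ _v : V, 2 := by
          rw [Finset.sum_const, Finset.card_univ]; ring
      _ ≤ ∑ v, T.degree v := Finset.sum_le_sum fun v _ => hge v
  omega

lemma reachable_induce_of_support {T : SimpleGraph V} {S : Set V} :
    ∀ {a b : V} (W : T.Walk a b) (ha : a ∈ S) (hb : b ∈ S), (∀ y ∈ W.support, y ∈ S) →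
      (T.induce S).Reachable ⟨a, ha⟩ ⟨b, hb⟩ := by
  intro a b W
  induction W with
  | nil => intro ha hb _; exact Reachable.refl _
  | @cons a c b h q ih =>
    intro ha hb hsup
    have hc : c ∈ S := hsup c (by simp [Walk.support_cons])
    refine Reachable.trans (Adj.reachable ?_) (ih hc hb fun y hy => hsup y (by simp [Walk.support_cons, hy]))
    simpa using h

lemma injOn_neighbors {T : SimpleGraph V} [Fintype V] [DecidableRel T.Adj] (hT : T.IsTree)
    {p : ℕ} {f : V → ℤ} (hf : IsLpqLabelling T p 1 f) (w : V) :
    Set.InjOn f (T.neighborFinset w : Set V) := by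
  intro a ha b hb hab
  by_contra hne
  have ha' : T.Adj w a := by simpa using ha
  have hb' : T.Adj w b := by simpa using hb
  have hnadj : ¬ T.Adj a b := tree_not_adj hT.2 hne ha'.symm hb'.symm
  have hd : T.dist a b = 2 := dist_eq_two' hT.1 hne hnadj ha'.symm hb'
  have h1 := hf.2 a b hd
  rw [hab] at h1
  simp at h1

lemma boundary_lemma {T : SimpleGraph V} [Fintype V] [DecidableRel T.Adj] (hT : T.IsTree)
    {p d : ℕ} (hp : 1 ≤ p) (hpd : p ≤ d) {f : V → ℤ}
    (hf : IsLpqLabelling T p 1 f) (hrange : ∀ x, f x ∈ Set.Ico (0:ℤ) ((d:ℤ) + 2*p - 2))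
    {w : V} (hw : T.degree w = d) :
    f w ≤ (p:ℤ) - 2 ∨ (d:ℤ) + p - 1 ≤ f w := by
  by_contra hcon
  push_neg at hcon
  obtain ⟨h1, h2⟩ := hcon
  have hsub : (T.neighborFinset w).image f ⊆
      Finset.Ico 0 (f w - p + 1) ∪ Finset.Ico (f w + p) ((d:ℤ) + 2*p - 2) := by
    intro c hc
    simp only [Finset.mem_image] at hc
    obtain ⟨u, hu, rfl⟩ := hc
    have hadj : T.Adj w u := by simpa using hu
    have hpu := hf.1 w u hadj
    have hr := hrange u
    simp only [Set.mem_Ico] at hr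
    simp only [Finset.mem_union, Finset.mem_Ico]
    rcases abs_cases (f w - f u) with ⟨he, _⟩ | ⟨he, _⟩ <;> omega
  have hcard := Finset.card_le_card hsub
  have hcard2 : (T.neighborFinset w).card ≤ ((T.neighborFinset w).image f).card := by
    rw [Finset.card_image_of_injOn (injOn_neighbors hT hf w)]
  have hd : (T.neighborFinset w).card = d := hw
  have hun := Finset.card_union_le (Finset.Ico (0:ℤ) (f w - p + 1))
    (Finset.Ico (f w + p) ((d:ℤ) + 2*p - 2))
  rw [Int.card_Ico, Int.card_Ico] at hun
  omega

lemma good_to_lpq {T : SimpleGraph V} (hc : T.Connected) {p : ℕ} {f : V → ℤ}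
    (h1 : ∀ u v, T.Adj u v → (p:ℤ) ≤ |f u - f v|)
    (h2 : ∀ u x c, u ≠ x → T.Adj u c → T.Adj x c → f u ≠ f x) :
    IsLpqLabelling T p 1 f := by
  refine ⟨h1, ?_⟩
  intro u v hd
  have hne : u ≠ v := by
    intro he; subst he; rw [SimpleGraph.dist_self] at hd; omega
  obtain ⟨W, hW⟩ := hc.exists_walk_length_eq_dist u v
  rw [hd] at hW
  cases W with
  | nil => simp at hW
  | @cons _ b _ h q =>
    cases q with
    | nil => simp at hW
    | @cons _ e _ hbe q2 =>
      cases q2 with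
      | nil =>
        have := h2 u v b hne h hbe.symm
        exact_mod_cast Int.one_le_abs (sub_ne_zero.mpr this)
      | cons h3 q3 => simp [Walk.length_cons] at hW


lemma key_labelling (p d : ℕ) (hp : 1 ≤ p) :
    ∀ (n : ℕ) (V : Type u) [Fintype V] (T : SimpleGraph V) [DecidableRel T.Adj],
      Fintype.card V = n → T.IsTree → (∀ v, T.degree v ≤ d) →
      ∀ L : V → Finset ℤ, (∀ v, d + 2 * p - 1 ≤ (L v).card) →
      ∃ f : V → ℤ, (∀ u v, T.Adj u v → (p : ℤ) ≤ |f u - f v|) ∧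
        (∀ u x c, u ≠ x → T.Adj u c → T.Adj x c → f u ≠ f x) ∧
        (∀ v, f v ∈ L v) := by
  intro n
  induction n using Nat.strong_induction_on with
  | _ n IH =>
  intro V _ T _ hcard htree hdeg L hL
  classical
  have hn1 : 1 ≤ n := by rw [← hcard]; exact @Fintype.card_pos _ _ htree.1.nonempty
  by_cases hn : n = 1
  · have hsub : ∀ a b : V, a = b := fun a b =>
      Fintype.card_le_one_iff.mp (by omega) a b
    have hLne : ∀ v, (L v).Nonempty := fun v => Finset.card_pos.mp (by have := hL v; omega)
    refine ⟨fun v => (hLne v).choose, ?_, ?_, fun v => (hLne v).choose_spec⟩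
    · intro u v huv; exact absurd (hsub u v) huv.ne
    · intro u x c hne' _ _; exact absurd (hsub u x) hne'
  · have h2 : 2 ≤ Fintype.card V := by omega
    obtain ⟨v₀, hv₀⟩ := exists_leaf T htree h2
    obtain ⟨w, hw⟩ := Finset.card_eq_one.mp (hv₀ : (T.neighborFinset v₀).card = 1)
    have hwadj : T.Adj v₀ w := by
      rw [← mem_neighborFinset, hw]; exact Finset.mem_singleton_self w
    have huniq : ∀ x, T.Adj v₀ x → x = w := by
      intro x hx
      have : x ∈ T.neighborFinset v₀ := by rwa [mem_neighborFinset]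
      rw [hw] at this; exact Finset.mem_singleton.mp this
    have hwv : w ≠ v₀ := hwadj.ne'
    set S : Set V := {x | x ≠ v₀} with hS
    have hmemS : ∀ x : V, x ∈ S ↔ x ≠ v₀ := fun x => Iff.rfl
    have hcardS : Fintype.card ↥S = n - 1 := by
      have h1 : Fintype.card ↥S = (Finset.univ.filter (fun x => x ≠ v₀)).card :=
        Fintype.card_subtype _
      rw [Finset.filter_ne' Finset.univ v₀, Finset.card_erase_of_mem (Finset.mem_univ v₀),
        Finset.card_univ, hcard] at h1
      exact h1
    set T' : SimpleGraph ↥S := T.induce S with hT'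
    -- T' is acyclic
    have hacyc : T'.IsAcyclic := by
      intro a wk hcyc
      exact htree.2 _ (hcyc.map (f := (SimpleGraph.Embedding.induce S).toHom)
        (fun a b hab => Subtype.val_injective hab))
    -- T' is connected
    have hconn : T'.Connected := by
      rw [connected_iff]
      refine ⟨fun a b => ?_, ⟨⟨w, hwv⟩⟩⟩
      obtain ⟨P, hP, -⟩ := htree.existsUnique_path a.1 b.1
      have hv₀P : v₀ ∉ P.support := by
        intro hmem
        obtain ⟨z₁, z₂, hz, h1, h2⟩ := path_internal_two_neighbors P hP v₀ hmem
          (fun h => a.2 h.symm) (fun h => b.2 h.symm)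
        have e1 : z₁ = w := huniq _ h1
        have e2 : z₂ = w := huniq _ h2
        exact hz (e1.trans e2.symm)
      have := reachable_induce_of_support P a.2 b.2
        (fun y hy => fun h => hv₀P (h ▸ hy))
      simpa using this
    have htree' : T'.IsTree := ⟨hconn, hacyc⟩
    have hdeg' : ∀ x : ↥S, T'.degree x ≤ d := by
      intro x
      refine le_trans ?_ (hdeg x.1)
      refine Finset.card_le_card_of_injOn Subtype.val ?_ Subtype.val_injective.injOn
      intro y hy
      rw [Finset.mem_coe, mem_neighborFinset] at hy ⊢
      simpa [hT'] using hy
    obtain ⟨f', hf1, hf2, hf3⟩ := IH (n-1) (by omega) ↥S T' hcardS htree' hdeg'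
      (fun x => L x.1) (fun x => hL x.1)
    set fw : ℤ := f' ⟨w, hwv⟩ with hfw
    set B1 : Finset ℤ := Finset.Ioo (fw - p) (fw + p) with hB1def
    set E : Finset V := (T.neighborFinset w).erase v₀ with hEdef
    set B2 : Finset ℤ := E.attach.image (fun x => f' ⟨x.1, Finset.ne_of_mem_erase x.2⟩) with hB2def
    have hB1 : B1.card ≤ 2 * p - 1 := by
      rw [hB1def, Int.card_Ioo]; omega
    have hE : E.card + 1 ≤ d := by
      have hv₀w : v₀ ∈ T.neighborFinset w := by
        rw [mem_neighborFinset]; exact hwadj.symm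
      have := Finset.card_erase_of_mem hv₀w
      have hdw : T.degree w = (T.neighborFinset w).card := rfl
      have := Finset.card_pos.mpr ⟨v₀, hv₀w⟩
      have := hdeg w
      rw [hEdef]; omega
    have hB2 : B2.card ≤ d - 1 := by
      refine le_trans Finset.card_image_le ?_
      rw [Finset.card_attach]; omega
    have hrem : 0 < (L v₀ \ (B1 ∪ B2)).card := by
      have h1 := Finset.card_le_card_sdiff_add_card (s := L v₀) (t := B1 ∪ B2)
      have h2 := Finset.card_union_le B1 B2
      have := hL v₀; omega
    obtain ⟨c, hc⟩ := Finset.card_pos.mp hrem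
    have hcL : c ∈ L v₀ := (Finset.mem_sdiff.mp hc).1
    have hcB1 : c ∉ B1 := fun h => (Finset.mem_sdiff.mp hc).2 (Finset.mem_union_left _ h)
    have hcB2 : c ∉ B2 := fun h => (Finset.mem_sdiff.mp hc).2 (Finset.mem_union_right _ h)
    have hcfw : (p : ℤ) ≤ |c - fw| := by
      rw [hB1def, Finset.mem_Ioo] at hcB1
      push_neg at hcB1
      rcases abs_cases (c - fw) with ⟨he, _⟩ | ⟨he, _⟩ <;> omega
    have hcne : ∀ (x : V) (hx : x ≠ v₀), T.Adj w x → c ≠ f' ⟨x, hx⟩ := by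
      intro x hx hadj hceq
      apply hcB2
      rw [hB2def]
      have hxE : x ∈ E := by
        rw [hEdef, Finset.mem_erase, mem_neighborFinset]; exact ⟨hx, hadj⟩
      refine Finset.mem_image.mpr ⟨⟨x, hxE⟩, Finset.mem_attach _ _, ?_⟩
      exact hceq.symm
    have hadjT' : ∀ (u v : V) (hu : u ≠ v₀) (hv : v ≠ v₀), T.Adj u v →
        T'.Adj ⟨u, hu⟩ ⟨v, hv⟩ := by
      intro u v hu hv h; simpa [hT'] using h
    refine ⟨fun x => if h : x = v₀ then c else f' ⟨x, h⟩, ?_, ?_, ?_⟩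
    · intro u v huv
      by_cases hu : u = v₀ <;> by_cases hv : v = v₀
      · exact absurd (hu.trans hv.symm) huv.ne
      · subst hu
        have : v = w := huniq v huv
        subst this
        dsimp only
        rw [dif_pos rfl, dif_neg hv]
        exact hcfw
      · subst hv
        have : u = w := huniq u huv.symm
        subst this
        dsimp only
        rw [dif_pos rfl, dif_neg hu, abs_sub_comm]
        exact hcfw
      · dsimp only
        rw [dif_neg hu, dif_neg hv]
        exact hf1 _ _ (hadjT' u v hu hv huv)
    · intro u x cc hnexu hu hx
      by_cases hcc : cc = v₀
      · subst hcc
        exact absurd ((huniq u hu.symm).trans (huniq x hx.symm).symm) hnexu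
      by_cases hu0 : u = v₀
      · have hccw : cc = w := huniq cc (hu0 ▸ hu)
        have hx0 : x ≠ v₀ := fun h => hnexu (hu0.trans h.symm)
        dsimp only
        rw [dif_pos hu0, dif_neg hx0]
        exact hcne x hx0 (hccw ▸ hx).symm
      by_cases hx0 : x = v₀
      · have hccw : cc = w := huniq cc (hx0 ▸ hx)
        dsimp only
        rw [dif_neg hu0, dif_pos hx0]
        exact (hcne u hu0 (hccw ▸ hu).symm).symm
      · dsimp only
        rw [dif_neg hu0, dif_neg hx0]
        exact hf2 ⟨u, hu0⟩ ⟨x, hx0⟩ ⟨cc, hcc⟩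
          (fun h => hnexu (congrArg Subtype.val h))
          (hadjT' u cc hu0 hcc hu) (hadjT' x cc hx0 hcc hx)
    · intro v
      by_cases h : v = v₀
      · subst h; dsimp only; rw [dif_pos rfl]; exact hcL
      · dsimp only; rw [dif_neg h]; exact hf3 ⟨v, h⟩

end TreeLpqAux

/-- if T is a tree with maximum degree Δ, 1 ≤ p ≤ Δ, and some vertex v and all
its neighbors have degree Δ, then χ_l^{p,1}(T) = Δ + 2p − 1. -/
theorem listLpqChromatic_tree_eq {V : Type*} [Fintype V] (T : SimpleGraph V)
    [DecidableRel T.Adj] (hT : T.IsTree) (p : ℕ) (hp : 1 ≤ p) (hpΔ : p ≤ T.maxDegree)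
    (hv : ∃ v : V, T.degree v = T.maxDegree ∧
      ∀ u : V, T.Adj v u → T.degree u = T.maxDegree) :
    listLpqChromatic T p 1 = T.maxDegree + 2 * p - 1 := by
  classical
  obtain ⟨v, hvdeg, hvnb⟩ := hv
  unfold listLpqChromatic
  set Δ := T.maxDegree with hΔdef
  have hΔ1 : 1 ≤ Δ := le_trans hp hpΔ
  set Sset := {k : ℕ | ∀ L : V → Finset ℤ, (∀ v, (L v).card = k) →
    ∃ f, IsLpqLabelling T p 1 f ∧ ∀ v : V, f v ∈ L v} with hSset
  have hmono : ∀ {k m : ℕ}, k ∈ Sset → k ≤ m → m ∈ Sset := by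
    intro k m hk hkm L hL
    choose L' hsub hcard using fun x => Finset.exists_subset_card_eq
      (show k ≤ (L x).card by rw [hL x]; exact hkm)
    obtain ⟨f, hf1, hf2⟩ := hk L' hcard
    exact ⟨f, hf1, fun x => hsub x (hf2 x)⟩
  have hmem : Δ + 2*p - 1 ∈ Sset := by
    intro L hL
    obtain ⟨f, h1, h2, h3⟩ := key_labelling p Δ hp (Fintype.card V) V T rfl hT
      (fun x => T.degree_le_maxDegree x) L (fun x => le_of_eq (hL x).symm)
    exact ⟨f, good_to_lpq hT.1 h1 h2, h3⟩
  have hnotmem : Δ + 2*p - 2 ∉ Sset := by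
    intro hbad
    set N : ℕ := Δ + 2*p - 2 with hN
    have hNcast : (N:ℤ) = (Δ:ℤ) + 2*p - 2 := by rw [hN]; omega
    obtain ⟨f, hfl, hfL⟩ := hbad (fun _ => Finset.Ico (0:ℤ) (N:ℤ))
      (fun _ => by rw [Int.card_Ico]; omega)
    have hrange : ∀ x, f x ∈ Set.Ico (0:ℤ) ((Δ:ℤ) + 2*p - 2) := by
      intro x
      have hx := hfL x
      rw [Finset.mem_Ico] at hx
      rw [Set.mem_Ico, ← hNcast]
      exact hx
    have hbv := boundary_lemma hT hp hpΔ hfl hrange hvdeg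
    have hinj := injOn_neighbors hT hfl v
    have hcardim : ((T.neighborFinset v).image f).card = Δ := by
      rw [Finset.card_image_of_injOn hinj]; exact hvdeg
    rcases hbv with hlow | hhigh
    · have hsubs : (T.neighborFinset v).image f ⊆
          Finset.Ico ((Δ:ℤ)+p-1) ((Δ:ℤ)+2*p-2) := by
        intro cI hcI
        obtain ⟨u, hu, rfl⟩ := Finset.mem_image.mp hcI
        have hadj : T.Adj v u := (mem_neighborFinset _ _ _).mp hu
        have hbu := boundary_lemma hT hp hpΔ hfl hrange (hvnb u hadj)
        have hpu := hfl.1 v u hadj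
        have h1 := hrange u
        have h2' := hrange v
        rw [Set.mem_Ico] at h1 h2'
        rw [Finset.mem_Ico]
        rcases hbu with h | h
        · exfalso
          rcases abs_cases (f v - f u) with ⟨he,_⟩|⟨he,_⟩ <;> omega
        · exact ⟨h, h1.2⟩
      have hcc := Finset.card_le_card hsubs
      rw [hcardim, Int.card_Ico] at hcc
      omega
    · have hsubs : (T.neighborFinset v).image f ⊆ Finset.Ico (0:ℤ) ((p:ℤ)-1) := by
        intro cI hcI
        obtain ⟨u, hu, rfl⟩ := Finset.mem_image.mp hcI
        have hadj : T.Adj v u := (mem_neighborFinset _ _ _).mp hu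
        have hbu := boundary_lemma hT hp hpΔ hfl hrange (hvnb u hadj)
        have hpu := hfl.1 v u hadj
        have h1 := hrange u
        have h2' := hrange v
        rw [Set.mem_Ico] at h1 h2'
        rw [Finset.mem_Ico]
        rcases hbu with h | h
        · exact ⟨h1.1, by omega⟩
        · exfalso
          rcases abs_cases (f v - f u) with ⟨he,_⟩|⟨he,_⟩ <;> omega
      have hcc := Finset.card_le_card hsubs
      rw [hcardim, Int.card_Ico] at hcc
      omega
  have hle : sInf Sset ≤ Δ + 2*p - 1 := Nat.sInf_le hmem
  have hge : Δ + 2*p - 1 ≤ sInf Sset := by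
    refine le_csInf ⟨_, hmem⟩ ?_
    intro k hk
    by_contra hlt
    push_neg at hlt
    exact hnotmem (hmono hk (by omega))
  omega
end
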